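/- Let K_1 ⊆ [0,1]^2 be a finite union of grid squares [t_1/10,(t_1+1)/10] × [t_2/10,(t_2+1)/10] with (t_1,t_2) ranging over a finite set T ⊆ {0,…,9}^2, and suppose there exists v ∈ ℝ^2 such that v − K_1 is disjoint from K_1 + ℤ^2. Define K = ⋂_{i≥0} K_i where K_0 = [0,1]^2 and K_{i+1} = ⋃_{t∈T} (1/10)·(K_i + t). Then K + K is nowhere dense in ℝ^2. -/

import Mathlib

open Set Pointwise

/-- The unit square `[0,1]^2 ⊆ ℝ × ℝ`. -/
def unitSq : Set (ℝ × ℝ) := Set.Icc (0 : ℝ) 1 ×ˢ Set.Icc (0 : ℝ) 1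

/-- The integer lattice `ℤ² ⊆ ℝ × ℝ`. -/
def intLattice : Set (ℝ × ℝ) := {p | ∃ m n : ℤ, p = ((m : ℝ), (n : ℝ))}

/-- The contraction `x ↦ (1/10)·(x + t)` of the plane. -/
noncomputable def contr (t : ℤ × ℤ) (x : ℝ × ℝ) : ℝ × ℝ :=
  (10 : ℝ)⁻¹ • (x + ((t.1 : ℝ), (t.2 : ℝ)))

/-- If `K₁ = ⋃_{t ∈ T} (1/10)·([0,1]² + t)` (a union of grid squares,
`T ⊆ {0,…,9}²`) admits a vector `v` with `v - K₁` disjoint from `K₁ + ℤ²`,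
then the set `K = ⋂ᵢ Kᵢ` of the associated recursion `K₀ = [0,1]²`,
`K_{i+1} = ⋃_{t ∈ T} (1/10)·(Kᵢ + t)` has `K + K` nowhere dense. -/
theorem sumset_nwd_of_separating_vector (T : Finset (ℤ × ℤ))
    (hT : ∀ t ∈ T, 0 ≤ t.1 ∧ t.1 ≤ 9 ∧ 0 ≤ t.2 ∧ t.2 ≤ 9)
    (K₁ : Set (ℝ × ℝ)) (hK₁ : K₁ = ⋃ t ∈ T, contr t '' unitSq)
    (hv : ∃ v : ℝ × ℝ, Disjoint ((fun x => v - x) '' K₁) (K₁ + intLattice))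
    (Kseq : ℕ → Set (ℝ × ℝ)) (h0 : Kseq 0 = unitSq)
    (hsucc : ∀ i, Kseq (i + 1) = ⋃ t ∈ T, contr t '' Kseq i) :
    IsNowhereDense ((⋂ i, Kseq i) + (⋂ i, Kseq i)) := by
  obtain ⟨v, hv⟩ := hv
  set K : Set (ℝ × ℝ) := ⋂ i, Kseq i with hK
  -- compactness of each level
  have hcomp : ∀ i, IsCompact (Kseq i) := by
    intro i
    induction i with
    | zero => rw [h0]; exact isCompact_Icc.prod isCompact_Icc
    | succ i ih =>
      rw [hsucc]
      refine T.finite_toSet.isCompact_biUnion (fun t _ => ?_)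
      exact ih.image (by unfold contr; fun_prop)
  -- structure lemma
  have hstruct : ∀ i, ∀ x ∈ Kseq (i + 1),
      ∃ y ∈ K₁, ∃ m n : ℤ, (10 : ℝ) ^ i • x = y + ((m : ℝ), (n : ℝ)) := by
    intro i
    induction i with
    | zero =>
      intro x hx
      rw [hsucc, h0, ← hK₁] at hx
      exact ⟨x, hx, 0, 0, by simp⟩
    | succ i ih =>
      intro x hx
      rw [hsucc] at hx
      simp only [mem_iUnion, mem_image] at hx
      obtain ⟨t, ht, z, hz, rfl⟩ := hx
      obtain ⟨y, hy, m, n, hmn⟩ := ih z hz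
      refine ⟨y, hy, m + 10 ^ i * t.1, n + 10 ^ i * t.2, ?_⟩
      have h1 : ((10 : ℝ) ^ i • z).1 = y.1 + (m : ℝ) := congrArg Prod.fst hmn
      have h2 : ((10 : ℝ) ^ i • z).2 = y.2 + (n : ℝ) := congrArg Prod.snd hmn
      simp only [Prod.smul_def, smul_eq_mul] at h1 h2 ⊢
      unfold contr
      simp only [Prod.smul_def, Prod.fst_add, Prod.snd_add, smul_eq_mul, Prod.ext_iff]
      constructor
      · push_cast
        have : (10:ℝ) ^ (i+1) * ((10:ℝ)⁻¹ * (z.1 + (t.1 : ℝ))) =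
            10 ^ i * z.1 + 10 ^ i * (t.1 : ℝ) := by ring
        rw [this, h1]; ring
      · push_cast
        have : (10:ℝ) ^ (i+1) * ((10:ℝ)⁻¹ * (z.2 + (t.2 : ℝ))) =
            10 ^ i * z.2 + 10 ^ i * (t.2 : ℝ) := by ring
        rw [this, h2]; ring
  -- reformulated separation
  have hv' : ∀ a ∈ K₁, ∀ b ∈ K₁, ∀ m n : ℤ, v ≠ a + b + ((m : ℝ), (n : ℝ)) := by
    intro a ha b hb m n h
    have h1 : v - a ∈ (fun x => v - x) '' K₁ := ⟨a, ha, rfl⟩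
    have h2 : v - a ∈ K₁ + intLattice := by
      refine Set.mem_add.2 ⟨b, hb, ((m : ℝ), (n : ℝ)), ⟨m, n, rfl⟩, ?_⟩
      rw [h]; abel
    exact Set.disjoint_left.1 hv h1 h2
  -- excluded dense points
  have hnot : ∀ (i : ℕ) (m n : ℤ), ((10 : ℝ) ^ i)⁻¹ • (v + ((m : ℝ), (n : ℝ))) ∉ K + K := by
    intro i m n hmem
    obtain ⟨a, ha, b, hb, hab⟩ := Set.mem_add.1 hmem
    have haK : a ∈ Kseq (i + 1) := mem_iInter.1 ha (i + 1)
    have hbK : b ∈ Kseq (i + 1) := mem_iInter.1 hb (i + 1)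
    obtain ⟨y, hy, m₁, n₁, h₁⟩ := hstruct i a haK
    obtain ⟨y', hy', m₂, n₂, h₂⟩ := hstruct i b hbK
    apply hv' y hy y' hy' (m₁ + m₂ - m) (n₁ + n₂ - n)
    have hpow : (10 : ℝ) ^ i ≠ 0 := by positivity
    have hv10 : v + ((m : ℝ), (n : ℝ)) = (10 : ℝ) ^ i • (a + b) := by
      rw [hab, smul_smul, mul_inv_cancel₀ hpow, one_smul]
    rw [smul_add, h₁, h₂] at hv10
    have e1 := congrArg Prod.fst hv10
    have e2 := congrArg Prod.snd hv10
    simp only [Prod.fst_add, Prod.snd_add] at e1 e2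
    apply Prod.ext <;> simp only [Prod.fst_add, Prod.snd_add] <;> push_cast
    · push_cast at e1; linarith
    · push_cast at e2; linarith
  -- K + K is closed
  have hKcl : IsClosed K := isClosed_iInter fun i => (hcomp i).isClosed
  have hKcomp : IsCompact K := (hcomp 0).of_isClosed_subset hKcl (iInter_subset Kseq 0)
  have hsumcl : IsClosed (K + K) := (hKcomp.add hKcomp).isClosed
  -- interior is empty
  have hint : interior (K + K) = ∅ := by
    rw [eq_empty_iff_forall_notMem]
    intro p hp
    obtain ⟨ε, hε, hball⟩ := Metric.mem_nhds_iff.1 (mem_interior_iff_mem_nhds.1 hp)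
    obtain ⟨i, hi⟩ : ∃ i : ℕ, ε⁻¹ < (10 : ℝ) ^ i := pow_unbounded_of_one_lt ε⁻¹ (by norm_num)
    have hpow : (0 : ℝ) < (10 : ℝ) ^ i := by positivity
    have hlt : ((10 : ℝ) ^ i)⁻¹ < ε := by
      rw [inv_lt_comm₀ hpow hε]; exact hi
    set c₁ : ℝ := (10 : ℝ) ^ i * p.1 - v.1
    set c₂ : ℝ := (10 : ℝ) ^ i * p.2 - v.2
    set q : ℝ × ℝ := ((10 : ℝ) ^ i)⁻¹ • (v + ((⌊c₁⌋ : ℝ), (⌊c₂⌋ : ℝ)))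
    have hq : q ∈ Metric.ball p ε := by
      rw [Metric.mem_ball, Prod.dist_eq, max_lt_iff]
      constructor
      · rw [Real.dist_eq]
        have : q.1 - p.1 = ((10 : ℝ) ^ i)⁻¹ * ((⌊c₁⌋ : ℝ) - c₁) := by
          simp only [q, Prod.smul_def, Prod.fst_add, smul_eq_mul, c₁]
          field_simp
          ring
        rw [this, abs_mul, abs_of_pos (inv_pos.2 hpow)]
        calc ((10 : ℝ) ^ i)⁻¹ * |(⌊c₁⌋ : ℝ) - c₁| ≤ ((10 : ℝ) ^ i)⁻¹ * 1 := by
              apply mul_le_mul_of_nonneg_left _ (le_of_lt (inv_pos.2 hpow))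
              rw [abs_sub_comm, abs_of_nonneg (by linarith [Int.floor_le c₁] : (0:ℝ) ≤ c₁ - ⌊c₁⌋)]
              linarith [Int.lt_floor_add_one c₁]
          _ < ε := by rw [mul_one]; exact hlt
      · rw [Real.dist_eq]
        have : q.2 - p.2 = ((10 : ℝ) ^ i)⁻¹ * ((⌊c₂⌋ : ℝ) - c₂) := by
          simp only [q, Prod.smul_def, Prod.snd_add, smul_eq_mul, c₂]
          field_simp
          ring
        rw [this, abs_mul, abs_of_pos (inv_pos.2 hpow)]
        calc ((10 : ℝ) ^ i)⁻¹ * |(⌊c₂⌋ : ℝ) - c₂| ≤ ((10 : ℝ) ^ i)⁻¹ * 1 := by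
              apply mul_le_mul_of_nonneg_left _ (le_of_lt (inv_pos.2 hpow))
              rw [abs_sub_comm, abs_of_nonneg (by linarith [Int.floor_le c₂] : (0:ℝ) ≤ c₂ - ⌊c₂⌋)]
              linarith [Int.lt_floor_add_one c₂]
          _ < ε := by rw [mul_one]; exact hlt
    exact hnot i ⌊c₁⌋ ⌊c₂⌋ (hball hq)
  show interior (closure (K + K)) = ∅
  rw [hsumcl.closure_eq]
  exact hint
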